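/- Let (W, S) be a Coxeter system, let γ = (t₀, …, t_n) be a sequence in S with each m(t_{i-1}, t_i) odd, and let u ∈ S with m(t_n, u) = 2λ even and finite. Then r_{γ,u} := p_γ · u(t_n u)^{λ-1} · p_γ⁻¹ is an involution in W that commutes with t₀. -/

import Mathlib

private lemma swap_pow {W : Type*} [Group W] (x y : W) (l : ℕ) :
    y * (x * y) ^ l = (y * x) ^ l * y := by
  have h : SemiconjBy y (x * y) (y * x) := by
    unfold SemiconjBy; group
  exact (h.pow_right l).eq

private lemma dihedral_odd {W : Type*} [Group W] (x y : W) (l : ℕ)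
    (hx : x * x = 1) (hy : y * y = 1) (h : (x * y) ^ (2 * l + 1) = 1) :
    ((y * x) ^ l)⁻¹ * x * (y * x) ^ l = y := by
  have hx' : x⁻¹ = x := inv_eq_of_mul_eq_one_right hx
  have hy' : y⁻¹ = y := inv_eq_of_mul_eq_one_right hy
  have hI : ((y * x) ^ l)⁻¹ = (x * y) ^ l := by
    rw [← inv_pow, mul_inv_rev, hx', hy']
  rw [hI]
  have hswap : x * (y * x) ^ l = (x * y) ^ l * x := swap_pow y x l
  have h2 : (x * y) ^ (2 * l) = y * x := by
    have : (x * y) ^ (2 * l) * (x * y) = 1 := by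
      rw [← pow_succ, h]
    have := eq_inv_of_mul_eq_one_left this
    rw [this, mul_inv_rev, hx', hy']
  calc (x * y) ^ l * x * (y * x) ^ l
      = (x * y) ^ l * (x * (y * x) ^ l) := by group
    _ = (x * y) ^ l * ((x * y) ^ l * x) := by rw [hswap]
    _ = (x * y) ^ (2 * l) * x := by rw [two_mul, pow_add]; group
    _ = y * x * x := by rw [h2]
    _ = y := by rw [mul_assoc, hx, mul_one]

private lemma conj_p {B W : Type*} [Group W] {M : CoxeterMatrix B} (cs : CoxeterSystem M W) :
    ∀ (n : ℕ) (t : Fin (n + 1) → B) (l : Fin n → ℕ),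
    (∀ k : Fin n, (cs.simple (t k.castSucc) * cs.simple (t k.succ)) ^ (2 * l k + 1) = 1) →
    ((List.ofFn fun k : Fin n =>
      (cs.simple (t k.succ) * cs.simple (t k.castSucc)) ^ l k).prod)⁻¹ * cs.simple (t 0) *
      (List.ofFn fun k : Fin n =>
      (cs.simple (t k.succ) * cs.simple (t k.castSucc)) ^ l k).prod
      = cs.simple (t (Fin.last n)) := by
  intro n
  induction n with
  | zero => intro t l _; simp
  | succ n ih =>
    intro t l hodd
    rw [List.ofFn_succ']
    set t' : Fin (n + 1) → B := fun k => t k.castSucc with ht'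
    set l' : Fin n → ℕ := fun k => l k.castSucc with hl'
    have hodd' : ∀ k : Fin n,
        (cs.simple (t' k.castSucc) * cs.simple (t' k.succ)) ^ (2 * l' k + 1) = 1 := by
      intro k
      have := hodd k.castSucc
      rw [Fin.succ_castSucc] at this; exact this
    have hmain := ih t' l' hodd'
    have hlist : (List.ofFn fun k : Fin n =>
        (cs.simple (t (k.castSucc).succ) * cs.simple (t (k.castSucc).castSucc)) ^ l k.castSucc)
        = (List.ofFn fun k : Fin n =>
        (cs.simple (t' k.succ) * cs.simple (t' k.castSucc)) ^ l' k) := by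
      simp only [ht', hl', Fin.succ_castSucc]
    have h0 : t' 0 = t 0 := by simp [ht']
    rw [List.concat_eq_append, List.prod_append, List.prod_singleton, hlist]
    set q := (List.ofFn fun k : Fin n =>
      (cs.simple (t' k.succ) * cs.simple (t' k.castSucc)) ^ l' k).prod with hq
    rw [h0] at hmain
    have key := dihedral_odd (cs.simple (t (Fin.last n).castSucc))
      (cs.simple (t (Fin.last n).succ)) (l (Fin.last n))
      (cs.simple_mul_simple_self _) (cs.simple_mul_simple_self _) (hodd (Fin.last n))
    have hlast : t' (Fin.last n) = t (Fin.last n).castSucc := rfl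
    have hsucc : (Fin.last n).succ = Fin.last (n + 1) := rfl
    rw [mul_inv_rev]
    calc ((cs.simple (t (Fin.last n).succ) * cs.simple (t (Fin.last n).castSucc)) ^
            l (Fin.last n))⁻¹ * q⁻¹ * cs.simple (t 0) *
          (q * (cs.simple (t (Fin.last n).succ) * cs.simple (t (Fin.last n).castSucc)) ^
            l (Fin.last n))
        = ((cs.simple (t (Fin.last n).succ) * cs.simple (t (Fin.last n).castSucc)) ^
            l (Fin.last n))⁻¹ * (q⁻¹ * cs.simple (t 0) * q) *
          (cs.simple (t (Fin.last n).succ) * cs.simple (t (Fin.last n).castSucc)) ^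
            l (Fin.last n) := by group
      _ = ((cs.simple (t (Fin.last n).succ) * cs.simple (t (Fin.last n).castSucc)) ^
            l (Fin.last n))⁻¹ * cs.simple (t (Fin.last n).castSucc) *
          (cs.simple (t (Fin.last n).succ) * cs.simple (t (Fin.last n).castSucc)) ^
            l (Fin.last n) := by rw [hmain]
      _ = cs.simple (t (Fin.last n).succ) := key
      _ = cs.simple (t (Fin.last (n + 1))) := by rw [hsucc]

/-- Let `(W, S)` be a Coxeter system, `γ = (t₀, …, t_n)` a sequence in `S` with each
`m(t_{i-1}, t_i)` odd, and `u ∈ S` with `m(t_n, u) = 2λ` even and finite (`λ ≥ 1`).  Then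
`r_{γ,u} := p_γ · u (t_n u)^{λ-1} · p_γ⁻¹` is an involution commuting with `t₀`, where
`p_γ := (t₁ t₀)^{l₁} ⋯ (t_n t_{n-1})^{l_n}`. -/
theorem r_gamma_u_is_involution_commuting
    {B W : Type*} [Group W] {M : CoxeterMatrix B} (cs : CoxeterSystem M W)
    (n : ℕ) (t : Fin (n + 1) → B) (l : Fin n → ℕ)
    (hodd : ∀ k : Fin n,
      orderOf (cs.simple (t k.castSucc) * cs.simple (t k.succ)) = 2 * l k + 1)
    (u : B) (lam : ℕ) (hlam : 1 ≤ lam)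
    (heven : orderOf (cs.simple (t (Fin.last n)) * cs.simple u) = 2 * lam)
    (p : W)
    (hp : p = (List.ofFn fun k : Fin n =>
      (cs.simple (t k.succ) * cs.simple (t k.castSucc)) ^ l k).prod)
    (r : W)
    (hr : r = p * (cs.simple u *
      (cs.simple (t (Fin.last n)) * cs.simple u) ^ (lam - 1)) * p⁻¹) :
    r * r = 1 ∧ r * cs.simple (t 0) = cs.simple (t 0) * r := by
  set x := cs.simple (t (Fin.last n)) with hxdef
  set y := cs.simple u with hydef
  have hx : x * x = 1 := cs.simple_mul_simple_self _
  have hy : y * y = 1 := cs.simple_mul_simple_self _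
  have hx' : x⁻¹ = x := inv_eq_of_mul_eq_one_right hx
  have hy' : y⁻¹ = y := inv_eq_of_mul_eq_one_right hy
  have hyx : (y * x)⁻¹ = x * y := by rw [mul_inv_rev, hx', hy']
  have hxy : (x * y)⁻¹ = y * x := by rw [mul_inv_rev, hx', hy']
  have hxy2lam : (x * y) ^ (2 * lam) = 1 := by
    rw [← heven]; exact pow_orderOf_eq_one _
  set c := y * (x * y) ^ (lam - 1) with hc
  -- c is an involution
  have hc2 : c * c = 1 := by
    have hsw : y * (x * y) ^ (lam - 1) = (y * x) ^ (lam - 1) * y := swap_pow x y (lam - 1)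
    calc c * c = y * (x * y) ^ (lam - 1) * (y * (x * y) ^ (lam - 1)) := rfl
      _ = ((y * x) ^ (lam - 1) * y) * (y * (x * y) ^ (lam - 1)) := by rw [← hsw]
      _ = (y * x) ^ (lam - 1) * (y * y) * (x * y) ^ (lam - 1) := by group
      _ = (y * x) ^ (lam - 1) * (x * y) ^ (lam - 1) := by rw [hy, mul_one]
      _ = ((x * y) ^ (lam - 1))⁻¹ * (x * y) ^ (lam - 1) := by rw [← inv_pow, hxy]
      _ = 1 := inv_mul_cancel _
  -- c commutes with x
  have hcx : c * x = x * c := by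
    have hl : lam - 1 + 1 = lam := Nat.succ_pred_eq_of_pos hlam
    have h1 : x * c = (x * y) ^ lam := by
      rw [hc, ← mul_assoc, ← pow_succ', hl]
    have hsw2 : x * (y * x) ^ (lam - 1) = (x * y) ^ (lam - 1) * x := swap_pow y x (lam - 1)
    have h2 : c * x = (y * x) ^ lam := by
      rw [hc, mul_assoc, ← hsw2, ← mul_assoc, ← pow_succ', hl]
    have h3 : (y * x) ^ lam = (x * y) ^ lam := by
      have : (x * y) ^ lam * (x * y) ^ lam = 1 := by
        rw [← pow_add, ← two_mul, hxy2lam]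
      have h4 : (x * y) ^ lam = ((x * y) ^ lam)⁻¹ := (inv_eq_of_mul_eq_one_right this).symm
      rw [h4, ← inv_pow, hxy]
    rw [h1, h2, h3]
  have hconj : p⁻¹ * cs.simple (t 0) * p = x := by
    rw [hp, hxdef]
    exact conj_p cs n t l (fun k => by rw [← hodd k]; exact pow_orderOf_eq_one _)
  constructor
  · rw [hr]
    calc p * c * p⁻¹ * (p * c * p⁻¹) = p * (c * c) * p⁻¹ := by group
      _ = 1 := by rw [hc2]; group
  · have hst : cs.simple (t 0) = p * x * p⁻¹ := by
      rw [← hconj]; group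
    rw [hr, hst]
    calc p * c * p⁻¹ * (p * x * p⁻¹) = p * (c * x) * p⁻¹ := by group
      _ = p * (x * c) * p⁻¹ := by rw [hcx]
      _ = p * x * p⁻¹ * (p * c * p⁻¹) := by group
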